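/- Let q be a prime power p^h and r, K ≥ 1, and let c_0, c_1 > 0 be constants. For K×r integer matrices b = [b_1, …, b_r] with all entries bounded by c_0·p^h in absolute value and gcd(p^h, b) ≤ c_1 (gcd of p^h with all entries of b), one has ∑_b ∏_{j=1}^r gcd(p^h, b_j)^{K+1} ≪ p^{h(rK + r − 1 + ε)}, where gcd(p^h, b_j) denotes the gcd of p^h and the entries of the column b_j. -/

import Mathlib

open Finset


-- card of multiples of m in [-N,N]
lemma aux_card_mult (M : ℕ) (m : ℤ) (hm : 0 < m) :
    (((Finset.Icc (-(m * M)) (m * M))).filter (fun x => m ∣ x)).card ≤ 2 * M + 1 := by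
  have h1 : (((Finset.Icc (-(m * M)) (m * M))).filter (fun x => m ∣ x)).card
      ≤ (Finset.Icc (-(M:ℤ)) (M:ℤ)).card := by
    apply Finset.card_le_card_of_injOn (fun x => x / m)
    · intro x hx
      simp only [Finset.mem_coe, Finset.mem_filter, Finset.mem_Icc] at hx ⊢
      obtain ⟨⟨hlo, hhi⟩, k, hk⟩ := hx
      subst hk
      rw [Int.mul_ediv_cancel_left _ hm.ne']
      constructor
      · have : m * (-(M:ℤ)) ≤ m * k := by linarith [mul_neg m (M:ℤ)]
        exact le_of_mul_le_mul_left this hm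
      · exact le_of_mul_le_mul_left hhi hm
    · intro x hx y hy hxy
      simp only [Finset.mem_coe, Finset.mem_filter] at hx hy
      obtain ⟨-, hxd⟩ := hx
      obtain ⟨-, hyd⟩ := hy
      simp only at hxy
      rw [← Int.ediv_mul_cancel hxd, ← Int.ediv_mul_cancel hyd, hxy]
  refine h1.trans ?_
  rw [Int.card_Icc]
  have : ((M:ℤ) + 1 - -(M:ℤ)) = ((2 * M + 1 : ℕ) : ℤ) := by push_cast; ring
  rw [this, Int.toNat_natCast]

-- per-entry sum bound
lemma aux_entry_sum (p h c0 : ℕ) (hp : p.Prime) (hh : 1 ≤ h) :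
    (∑ x ∈ Finset.Icc (-(c0 * (p:ℤ) ^ h)) ((c0:ℤ) * (p:ℤ) ^ h), Nat.gcd (p ^ h) x.natAbs)
      ≤ (h + 1) * ((2 * c0 + 1) * p ^ h) := by
  have hp1 : 1 < p := hp.one_lt
  calc (∑ x ∈ Finset.Icc (-(c0 * (p:ℤ) ^ h)) ((c0:ℤ) * (p:ℤ) ^ h), Nat.gcd (p ^ h) x.natAbs)
      ≤ ∑ x ∈ Finset.Icc (-(c0 * (p:ℤ) ^ h)) ((c0:ℤ) * (p:ℤ) ^ h),
          ∑ e ∈ Finset.range (h+1), p ^ e * (if ((p:ℤ))^e ∣ x then 1 else 0) := by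
        apply Finset.sum_le_sum
        intro x hx
        obtain ⟨e, hee, hge⟩ := (Nat.dvd_prime_pow hp).mp (Nat.gcd_dvd_left (p^h) x.natAbs)
        have hdvd : ((p:ℤ))^e ∣ x := by
          rw [show ((p:ℤ))^e = ((p^e : ℕ) : ℤ) by push_cast; ring, Int.natCast_dvd]
          exact hge ▸ Nat.gcd_dvd_right (p^h) x.natAbs
        calc Nat.gcd (p^h) x.natAbs = p ^ e * (if ((p:ℤ))^e ∣ x then 1 else 0) := by
              rw [if_pos hdvd, mul_one, hge]
          _ ≤ _ := Finset.single_le_sum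
              (f := fun e => p ^ e * (if ((p:ℤ))^e ∣ x then 1 else 0))
              (fun i _ => Nat.zero_le _) (Finset.mem_range.mpr (by omega))
    _ = ∑ e ∈ Finset.range (h+1), ∑ x ∈ Finset.Icc (-(c0 * (p:ℤ) ^ h)) ((c0:ℤ) * (p:ℤ) ^ h),
          p ^ e * (if ((p:ℤ))^e ∣ x then 1 else 0) := Finset.sum_comm
    _ ≤ ∑ e ∈ Finset.range (h+1), (2 * c0 + 1) * p ^ h := by
        apply Finset.sum_le_sum
        intro e he
        have he' : e ≤ h := Nat.lt_succ_iff.mp (Finset.mem_range.mp he)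
        rw [← Finset.mul_sum, Finset.sum_boole, Nat.cast_id]
        have hset : Finset.Icc (-(c0 * (p:ℤ) ^ h)) ((c0:ℤ) * (p:ℤ) ^ h)
            = Finset.Icc (-((p:ℤ)^e * ((c0 * p^(h-e) : ℕ) : ℤ))) ((p:ℤ)^e * ((c0 * p^(h-e) : ℕ) : ℤ)) := by
          have : (p:ℤ)^e * ((c0 * p^(h-e) : ℕ) : ℤ) = (c0:ℤ) * (p:ℤ)^h := by
            push_cast
            rw [← mul_assoc, mul_comm ((p:ℤ)^e) (c0:ℤ), mul_assoc, ← pow_add,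
              Nat.add_sub_cancel' he']
          rw [this]
        rw [hset]
        have hcard := aux_card_mult (c0 * p^(h-e)) ((p:ℤ)^e) (by positivity)
        calc p ^ e * ((Finset.Icc (-((p:ℤ)^e * ((c0 * p^(h-e) : ℕ) : ℤ))) ((p:ℤ)^e * ((c0 * p^(h-e) : ℕ) : ℤ))).filter
              (fun x => ((p:ℤ))^e ∣ x)).card
            ≤ p ^ e * (2 * (c0 * p^(h-e)) + 1) := Nat.mul_le_mul_left _ hcard
          _ ≤ (2 * c0 + 1) * p ^ h := by
              have hpe : p ^ e * p ^ (h - e) = p ^ h := by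
                rw [← pow_add, Nat.add_sub_cancel' he']
              have hple : p ^ e ≤ p ^ h := Nat.pow_le_pow_right hp.pos he'
              nlinarith
    _ = (h + 1) * ((2 * c0 + 1) * p ^ h) := by
        rw [Finset.sum_const, Finset.card_range, smul_eq_mul]


lemma aux_pointwise (r K p h c1 : ℕ) (hr : 1 ≤ r) (hp : p.Prime)
    (b : Fin K × Fin r → ℤ)
    (hb : Nat.gcd (p ^ h) (Finset.univ.gcd fun q : Fin K × Fin r => (b q).natAbs) ≤ c1) :
    (∏ j : Fin r,
        (Nat.gcd (p ^ h) (Finset.univ.gcd fun k : Fin K => (b (k, j)).natAbs)) ^ (K + 1))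
      ≤ c1 * (p ^ h) ^ (r - 1) * ∏ q : Fin K × Fin r, Nat.gcd (p ^ h) ((b q).natAbs) := by
  haveI : Nonempty (Fin r) := Fin.pos_iff_nonempty.mp hr
  set g : Fin r → ℕ := fun j => Nat.gcd (p ^ h) (Finset.univ.gcd fun k : Fin K => (b (k, j)).natAbs) with hg
  have hgdvd : ∀ j, g j ∣ p ^ h := fun j => Nat.gcd_dvd_left _ _
  have hgle : ∀ j, g j ≤ p ^ h := fun j => Nat.le_of_dvd (pow_pos hp.pos h) (hgdvd j)
  have hgdvd2 : ∀ j k, g j ∣ (b (k, j)).natAbs := fun j k =>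
    dvd_trans (Nat.gcd_dvd_right _ _) (Finset.gcd_dvd (Finset.mem_univ k))
  -- minimizing column
  obtain ⟨j0, -, hj0⟩ := Finset.exists_min_image Finset.univ g Finset.univ_nonempty
  have hj0' : ∀ j, g j0 ∣ g j := by
    intro j
    obtain ⟨a, ha, hga⟩ := (Nat.dvd_prime_pow hp).mp (hgdvd j0)
    obtain ⟨a', ha', hga'⟩ := (Nat.dvd_prime_pow hp).mp (hgdvd j)
    have hle : g j0 ≤ g j := hj0 j (Finset.mem_univ j)
    rw [hga, hga'] at hle ⊢
    exact pow_dvd_pow p ((Nat.pow_le_pow_iff_right hp.one_lt).mp hle)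
  have hj0c1 : g j0 ≤ c1 := by
    have hdvd : g j0 ∣ Nat.gcd (p ^ h) (Finset.univ.gcd fun q : Fin K × Fin r => (b q).natAbs) :=
      Nat.dvd_gcd (hgdvd j0) (Finset.dvd_gcd fun q _ =>
        dvd_trans (hj0' q.2) (hgdvd2 q.2 q.1))
    exact le_trans (Nat.le_of_dvd (Nat.gcd_pos_of_pos_left _ (pow_pos hp.pos h)) hdvd) hb
  have step1 : (∏ j : Fin r, g j) ≤ c1 * (p ^ h) ^ (r - 1) := by
    rw [← Finset.mul_prod_erase Finset.univ g (Finset.mem_univ j0)]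
    apply Nat.mul_le_mul hj0c1
    calc (∏ j ∈ Finset.univ.erase j0, g j) ≤ ∏ j ∈ Finset.univ.erase j0, p ^ h :=
          Finset.prod_le_prod' (fun j _ => hgle j)
      _ = (p ^ h) ^ (r - 1) := by
          rw [Finset.prod_const, Finset.card_erase_of_mem (Finset.mem_univ j0),
            Finset.card_univ, Fintype.card_fin]
  have step2 : (∏ j : Fin r, (g j) ^ K) ≤ ∏ q : Fin K × Fin r, Nat.gcd (p ^ h) ((b q).natAbs) := by
    have hre : ∀ j : Fin r, (g j) ^ K = ∏ _k : Fin K, g j := fun j => by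
      rw [Finset.prod_const, Finset.card_univ, Fintype.card_fin]
    calc (∏ j : Fin r, (g j) ^ K) = ∏ j : Fin r, ∏ k : Fin K, g j := by
          simp_rw [hre]
      _ ≤ ∏ j : Fin r, ∏ k : Fin K, Nat.gcd (p ^ h) ((b (k, j)).natAbs) := by
          apply Finset.prod_le_prod'
          intro j _
          apply Finset.prod_le_prod'
          intro k _
          exact Nat.le_of_dvd (Nat.gcd_pos_of_pos_left _ (pow_pos hp.pos h))
            (Nat.dvd_gcd (hgdvd j) (hgdvd2 j k))
      _ = ∏ q : Fin K × Fin r, Nat.gcd (p ^ h) ((b q).natAbs) := by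
          rw [Fintype.prod_prod_type]
          exact Finset.prod_comm
  calc (∏ j : Fin r, (g j) ^ (K + 1)) = (∏ j : Fin r, (g j) ^ K) * ∏ j : Fin r, g j := by
        rw [← Finset.prod_mul_distrib]
        simp_rw [← pow_succ]
    _ ≤ (∏ q : Fin K × Fin r, Nat.gcd (p ^ h) ((b q).natAbs)) * (c1 * (p ^ h) ^ (r - 1)) :=
        Nat.mul_le_mul step2 step1
    _ = c1 * (p ^ h) ^ (r - 1) * ∏ q : Fin K × Fin r, Nat.gcd (p ^ h) ((b q).natAbs) := by
        ring

lemma aux_poly (A : ℕ) (ε : ℝ) (hε : 0 < ε) :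
    ∃ C : ℝ, 0 < C ∧ ∀ p h : ℕ, 2 ≤ p → 1 ≤ h →
      ((h : ℝ) + 1) ^ A ≤ C * (p : ℝ) ^ ((h : ℝ) * ε) := by
  set t : ℝ := ε * Real.log 2 with htdef
  have ht : 0 < t := mul_pos hε (Real.log_pos one_lt_two)
  refine ⟨2 ^ A * (A.factorial : ℝ) / t ^ A, by positivity, ?_⟩
  intro p h hp hh
  have hh1 : (1 : ℝ) ≤ (h : ℝ) := by exact_mod_cast hh
  have hth : 0 ≤ t * h := by positivity
  -- (t*h)^A / A! ≤ exp (t*h)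
  have hexp : (t * h) ^ A / (A.factorial : ℝ) ≤ Real.exp (t * h) := by
    refine le_trans ?_ (Real.sum_le_exp_of_nonneg hth (A + 1))
    exact Finset.single_le_sum (f := fun i => (t * h) ^ i / (i.factorial : ℝ))
      (fun i _ => by positivity) (Finset.self_mem_range_succ A)
  have hA : ((h : ℝ) + 1) ^ A ≤ 2 ^ A * (h : ℝ) ^ A := by
    rw [← mul_pow]
    exact pow_le_pow_left₀ (by positivity) (by linarith) A
  have hhA : (h : ℝ) ^ A ≤ (A.factorial : ℝ) / t ^ A * Real.exp (t * h) := by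
    rw [div_le_iff₀ (by positivity)] at hexp
    rw [mul_pow] at hexp
    rw [div_mul_eq_mul_div, le_div_iff₀ (by positivity)]
    calc (h:ℝ) ^ A * t ^ A = t ^ A * (h:ℝ) ^ A := by ring
      _ ≤ Real.exp (t * h) * (A.factorial : ℝ) := hexp
      _ = (A.factorial : ℝ) * Real.exp (t * h) := by ring
  have hexp2 : Real.exp (t * h) ≤ (p : ℝ) ^ ((h : ℝ) * ε) := by
    have h2 : Real.exp (t * h) = (2 : ℝ) ^ ((h : ℝ) * ε) := by
      rw [Real.rpow_def_of_pos (by norm_num : (0:ℝ) < 2)]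
      congr 1
      rw [htdef]; ring
    rw [h2]
    exact Real.rpow_le_rpow (by norm_num) (by exact_mod_cast hp) (by positivity)
  calc ((h : ℝ) + 1) ^ A ≤ 2 ^ A * (h : ℝ) ^ A := hA
    _ ≤ 2 ^ A * ((A.factorial : ℝ) / t ^ A * Real.exp (t * h)) := by
        apply mul_le_mul_of_nonneg_left hhA (by positivity)
    _ = 2 ^ A * (A.factorial : ℝ) / t ^ A * Real.exp (t * h) := by ring
    _ ≤ 2 ^ A * (A.factorial : ℝ) / t ^ A * (p : ℝ) ^ ((h : ℝ) * ε) := by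
        apply mul_le_mul_of_nonneg_left hexp2 (by positivity)


theorem stmt18 (r K : ℕ) (hr : 1 ≤ r) (hK : 1 ≤ K) (c0 c1 : ℕ)
    (hc0 : 0 < c0) (hc1 : 0 < c1) (ε : ℝ) (hε : 0 < ε) :
    ∃ C : ℝ, 0 < C ∧ ∀ p h : ℕ, p.Prime → 1 ≤ h →
      (∑ b ∈ (Fintype.piFinset fun _ : Fin K × Fin r =>
            Finset.Icc (-(c0 * (p : ℤ) ^ h)) ((c0 : ℤ) * (p : ℤ) ^ h)).filter
          (fun b => Nat.gcd (p ^ h)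
            (Finset.univ.gcd fun q : Fin K × Fin r => (b q).natAbs) ≤ c1),
        ∏ j : Fin r,
          ((Nat.gcd (p ^ h) (Finset.univ.gcd fun k : Fin K => (b (k, j)).natAbs) : ℝ))
            ^ (K + 1))
      ≤ C * (p : ℝ) ^ ((h : ℝ) * (r * K + r - 1 + ε)) := by
  obtain ⟨Cp, hCp, hpoly⟩ := aux_poly (K * r) ε hε
  refine ⟨(c1 : ℝ) * (2 * (c0 : ℝ) + 1) ^ (K * r) * Cp, by positivity, ?_⟩
  intro p h hp hh
  have hppos : (0 : ℝ) < (p : ℝ) := by exact_mod_cast hp.pos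
  -- the natural number sum
  set F := (Fintype.piFinset fun _ : Fin K × Fin r =>
      Finset.Icc (-(c0 * (p : ℤ) ^ h)) ((c0 : ℤ) * (p : ℤ) ^ h)).filter
    (fun b => Nat.gcd (p ^ h)
      (Finset.univ.gcd fun q : Fin K × Fin r => (b q).natAbs) ≤ c1) with hF
  have hcast : (∑ b ∈ F, ∏ j : Fin r,
      ((Nat.gcd (p ^ h) (Finset.univ.gcd fun k : Fin K => (b (k, j)).natAbs) : ℝ)) ^ (K + 1))
      = ((∑ b ∈ F, ∏ j : Fin r,
      (Nat.gcd (p ^ h) (Finset.univ.gcd fun k : Fin K => (b (k, j)).natAbs)) ^ (K + 1) : ℕ) : ℝ) := by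
    push_cast
    rfl
  rw [hcast]
  -- nat-level bound
  have hnat : (∑ b ∈ F, ∏ j : Fin r,
      (Nat.gcd (p ^ h) (Finset.univ.gcd fun k : Fin K => (b (k, j)).natAbs)) ^ (K + 1))
      ≤ c1 * (p ^ h) ^ (r - 1) * ((h + 1) * ((2 * c0 + 1) * p ^ h)) ^ (K * r) := by
    calc (∑ b ∈ F, ∏ j : Fin r,
        (Nat.gcd (p ^ h) (Finset.univ.gcd fun k : Fin K => (b (k, j)).natAbs)) ^ (K + 1))
        ≤ ∑ b ∈ F, c1 * (p ^ h) ^ (r - 1) *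
            ∏ q : Fin K × Fin r, Nat.gcd (p ^ h) ((b q).natAbs) := by
          apply Finset.sum_le_sum
          intro b hb
          rw [hF, Finset.mem_filter] at hb
          exact aux_pointwise r K p h c1 hr hp b hb.2
      _ ≤ ∑ b ∈ (Fintype.piFinset fun _ : Fin K × Fin r =>
            Finset.Icc (-(c0 * (p : ℤ) ^ h)) ((c0 : ℤ) * (p : ℤ) ^ h)),
            c1 * (p ^ h) ^ (r - 1) * ∏ q : Fin K × Fin r, Nat.gcd (p ^ h) ((b q).natAbs) :=
          Finset.sum_le_sum_of_subset (by rw [hF]; exact Finset.filter_subset _ _)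
      _ = c1 * (p ^ h) ^ (r - 1) * ∑ b ∈ (Fintype.piFinset fun _ : Fin K × Fin r =>
            Finset.Icc (-(c0 * (p : ℤ) ^ h)) ((c0 : ℤ) * (p : ℤ) ^ h)),
            ∏ q : Fin K × Fin r, Nat.gcd (p ^ h) ((b q).natAbs) := by
          rw [Finset.mul_sum]
      _ = c1 * (p ^ h) ^ (r - 1) * ∏ q : Fin K × Fin r,
            (∑ x ∈ Finset.Icc (-(c0 * (p : ℤ) ^ h)) ((c0 : ℤ) * (p : ℤ) ^ h),
              Nat.gcd (p ^ h) x.natAbs) := by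
          rw [Finset.sum_prod_piFinset (Finset.Icc (-(c0 * (p : ℤ) ^ h)) ((c0 : ℤ) * (p : ℤ) ^ h)) (fun (_ : Fin K × Fin r) (x : ℤ) => Nat.gcd (p ^ h) x.natAbs)]
      _ ≤ c1 * (p ^ h) ^ (r - 1) * ∏ _q : Fin K × Fin r, ((h + 1) * ((2 * c0 + 1) * p ^ h)) := by
          apply Nat.mul_le_mul_left
          exact Finset.prod_le_prod' (fun q _ => aux_entry_sum p h c0 hp hh)
      _ = c1 * (p ^ h) ^ (r - 1) * ((h + 1) * ((2 * c0 + 1) * p ^ h)) ^ (K * r) := by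
          rw [Finset.prod_const, Finset.card_univ, Fintype.card_prod,
            Fintype.card_fin, Fintype.card_fin]
  have hb1 : ((h : ℝ) + 1) ^ (K * r) ≤ Cp * (p : ℝ) ^ ((h : ℝ) * ε) :=
    hpoly p h hp.two_le hh
  calc ((∑ b ∈ F, ∏ j : Fin r,
      (Nat.gcd (p ^ h) (Finset.univ.gcd fun k : Fin K => (b (k, j)).natAbs)) ^ (K + 1) : ℕ) : ℝ)
      ≤ ((c1 * (p ^ h) ^ (r - 1) * ((h + 1) * ((2 * c0 + 1) * p ^ h)) ^ (K * r) : ℕ) : ℝ) := by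
        exact_mod_cast hnat
    _ = (c1 : ℝ) * ((p : ℝ) ^ h) ^ (r - 1) *
          (((h : ℝ) + 1) * ((2 * (c0 : ℝ) + 1) * (p : ℝ) ^ h)) ^ (K * r) := by
        push_cast
        ring
    _ = ((c1 : ℝ) * (2 * (c0 : ℝ) + 1) ^ (K * r)) *
          (((h : ℝ) + 1) ^ (K * r) * (((p : ℝ) ^ h) ^ (r - 1) * ((p : ℝ) ^ h) ^ (K * r))) := by
        rw [mul_pow, mul_pow]
        ring
    _ ≤ ((c1 : ℝ) * (2 * (c0 : ℝ) + 1) ^ (K * r)) *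
          ((Cp * (p : ℝ) ^ ((h : ℝ) * ε)) * (((p : ℝ) ^ h) ^ (r - 1) * ((p : ℝ) ^ h) ^ (K * r))) := by
        apply mul_le_mul_of_nonneg_left _ (by positivity)
        apply mul_le_mul_of_nonneg_right hb1 (by positivity)
    _ = (c1 : ℝ) * (2 * (c0 : ℝ) + 1) ^ (K * r) * Cp *
          ((p : ℝ) ^ ((h : ℝ) * ε) * (p : ℝ) ^ ((h * (r - 1) + h * (K * r) : ℕ))) := by
        rw [← pow_mul, ← pow_mul, ← pow_add]
        ring
    _ = (c1 : ℝ) * (2 * (c0 : ℝ) + 1) ^ (K * r) * Cp *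
          (p : ℝ) ^ ((h : ℝ) * (r * K + r - 1 + ε)) := by
        rw [← Real.rpow_natCast (p : ℝ) (h * (r - 1) + h * (K * r)), ← Real.rpow_add hppos]
        congr 2
        push_cast [Nat.cast_sub hr]
        ring
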